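/- Let K be a field and m ≥ n. Then the annihilator of tensor space in the Brauer algebra is contained in the ideal generated by e_1: ann_{B_n(−2m)}(V^{⊗n}) ⊆ B^{(1)}, where B^{(1)} is the two-sided ideal of B_n(−2m) generated by e_1. -/

import Mathlib

open scoped BigOperators Classical
open MulOpposite

noncomputable section

namespace SpBrauer

/-- the conjugate index `i' = 2m-1-i` (0-based version of `2m+1-i`). -/
def conjIdx (m : ℕ) (i : Fin (2*m)) : Fin (2*m) :=
  ⟨2*m - 1 - (i : ℕ), by have := i.isLt; omega⟩

/-- the sign `ε_{ij}`. -/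
def epsZ (m : ℕ) (i j : Fin (2*m)) : ℤ :=
  if (i : ℕ) + (j : ℕ) + 1 = 2*m then (if (i : ℕ) < (j : ℕ) then 1 else -1) else 0

/-- tensor space `V^{⊗ n}` modelled as the free module on multi-indices. -/
abbrev Ten (R : Type) (m n : ℕ) : Type := (Fin n → Fin (2*m)) → R

/-- basis tensor `v_{i_1} ⊗ ⋯ ⊗ v_{i_n}`. -/
def dta (R : Type) [CommRing R] (m n : ℕ) (i : Fin n → Fin (2*m)) : Ten R m n :=
  fun a => if a = i then 1 else 0

/-- the linear map on free modules with "matrix" `M`. -/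
def funMap (R : Type) [CommRing R] (α β : Type) [Fintype α]
    (M : β → α → R) : (α → R) →ₗ[R] (β → R) where
  toFun f := fun b => ∑ a, M b a * f a
  map_add' f g := by
    funext b
    simp [Pi.add_apply, mul_add, Finset.sum_add_distrib]
  map_smul' c f := by
    funext b
    simp only [Pi.smul_apply, smul_eq_mul, RingHom.id_apply]
    rw [Finset.mul_sum]
    exact Finset.sum_congr rfl (fun a _ => by ring)

/-- the operator given by the right action of the Brauer algebra generator `s_j`
(`j` is 0-based: `s_j` swaps positions `j` and `j+1` with a sign). -/
def sOp (R : Type) [CommRing R] (m n : ℕ) (j : Fin (n-1)) :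
    Ten R m n →ₗ[R] Ten R m n :=
  funMap R _ _ (fun a b =>
    if b = a ∘ (Equiv.swap (⟨(j:ℕ), by have := j.isLt; omega⟩ : Fin n)
        (⟨(j:ℕ)+1, by have := j.isLt; omega⟩ : Fin n)) then -1 else 0)

/-- the operator given by the right action of the Brauer algebra generator `e_j`. -/
def eOp (R : Type) [CommRing R] (m n : ℕ) (j : Fin (n-1)) :
    Ten R m n →ₗ[R] Ten R m n :=
  funMap R _ _ (fun a b =>
    (if ∀ p : Fin n, p ≠ (⟨(j:ℕ), by have := j.isLt; omega⟩ : Fin n) →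
        p ≠ (⟨(j:ℕ)+1, by have := j.isLt; omega⟩ : Fin n) → b p = a p then 1 else 0) *
    (-((epsZ m (a ⟨(j:ℕ), by have := j.isLt; omega⟩) (a ⟨(j:ℕ)+1, by have := j.isLt; omega⟩) : ℤ) : R)) *
    ((epsZ m (b ⟨(j:ℕ), by have := j.isLt; omega⟩) (b ⟨(j:ℕ)+1, by have := j.isLt; omega⟩) : ℤ) : R))

/-- the (sign-twisted) right place-permutation action of a permutation on tensor space. -/
def permOp (R : Type) [CommRing R] (m n : ℕ) (π : Equiv.Perm (Fin n)) :
    Ten R m n →ₗ[R] Ten R m n :=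
  funMap R _ _ (fun a b => if b = a ∘ π then ((Equiv.Perm.sign π : ℤ) : R) else 0)

/-- the `n`-fold tensor power of (the endomorphism of `V` given by) a matrix `g`,
acting diagonally on tensor space. -/
def tenOp (R : Type) [CommRing R] (m n : ℕ) (g : Matrix (Fin (2*m)) (Fin (2*m)) R) :
    Ten R m n →ₗ[R] Ten R m n :=
  funMap R _ _ (fun a b => ∏ k : Fin n, g (a k) (b k))

/-- the skew-symmetric bilinear form `(v,w)` determined by `(v_i, v_j) = ε_{ij}`. -/
def sform (R : Type) [CommRing R] (m : ℕ) (v w : Fin (2*m) → R) : R :=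
  ∑ i, ∑ j, v i * ((epsZ m i j : ℤ) : R) * w j

/-- membership in the symplectic group `Sp(V)` (an invertible linear map preserving the form). -/
def IsSymp (R : Type) [CommRing R] (m : ℕ) (g : Matrix (Fin (2*m)) (Fin (2*m)) R) : Prop :=
  IsUnit g.det ∧ ∀ v w, sform R m (g.mulVec v) (g.mulVec w) = sform R m v w

/-- membership in the symplectic similitude group `GSp(V)`. -/
def IsGSymp (R : Type) [CommRing R] (m : ℕ) (g : Matrix (Fin (2*m)) (Fin (2*m)) R) : Prop :=
  IsUnit g.det ∧ ∃ d : R, d ≠ 0 ∧ ∀ v w, sform R m (g.mulVec v) (g.mulVec w) = d * sform R m v w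

/-! ### The Brauer algebra, by generators and relations -/

/-- generators of the Brauer algebra `B_n(x)`:  `s i` and `e i` for `i = 0, …, n-2`
(0-based versions of `s_1, …, s_{n-1}`, `e_1, …, e_{n-1}`). -/
inductive BGen (n : ℕ) : Type
  | s : Fin (n-1) → BGen n
  | e : Fin (n-1) → BGen n

/-- the defining relations of the Brauer algebra `B_n(x)`. -/
inductive BRel (R : Type) [CommRing R] (x : R) (n : ℕ) :
    FreeAlgebra R (BGen n) → FreeAlgebra R (BGen n) → Prop
  | ss (i : Fin (n-1)) :
      BRel R x n (FreeAlgebra.ι R (BGen.s i) * FreeAlgebra.ι R (BGen.s i)) 1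
  | ee (i : Fin (n-1)) :
      BRel R x n (FreeAlgebra.ι R (BGen.e i) * FreeAlgebra.ι R (BGen.e i))
        (x • FreeAlgebra.ι R (BGen.e i))
  | es (i : Fin (n-1)) :
      BRel R x n (FreeAlgebra.ι R (BGen.e i) * FreeAlgebra.ι R (BGen.s i))
        (FreeAlgebra.ι R (BGen.e i))
  | se (i : Fin (n-1)) :
      BRel R x n (FreeAlgebra.ι R (BGen.s i) * FreeAlgebra.ι R (BGen.e i))
        (FreeAlgebra.ι R (BGen.e i))
  | ssComm (i j : Fin (n-1)) (h : (i:ℕ)+1 < (j:ℕ)) :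
      BRel R x n (FreeAlgebra.ι R (BGen.s i) * FreeAlgebra.ι R (BGen.s j))
        (FreeAlgebra.ι R (BGen.s j) * FreeAlgebra.ι R (BGen.s i))
  | seComm (i j : Fin (n-1)) (h : (i:ℕ)+1 < (j:ℕ)) :
      BRel R x n (FreeAlgebra.ι R (BGen.s i) * FreeAlgebra.ι R (BGen.e j))
        (FreeAlgebra.ι R (BGen.e j) * FreeAlgebra.ι R (BGen.s i))
  | eeComm (i j : Fin (n-1)) (h : (i:ℕ)+1 < (j:ℕ)) :
      BRel R x n (FreeAlgebra.ι R (BGen.e i) * FreeAlgebra.ι R (BGen.e j))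
        (FreeAlgebra.ι R (BGen.e j) * FreeAlgebra.ι R (BGen.e i))
  | braid (i j : Fin (n-1)) (h : (j:ℕ) = (i:ℕ)+1) :
      BRel R x n
        (FreeAlgebra.ι R (BGen.s i) * FreeAlgebra.ι R (BGen.s j) * FreeAlgebra.ι R (BGen.s i))
        (FreeAlgebra.ι R (BGen.s j) * FreeAlgebra.ι R (BGen.s i) * FreeAlgebra.ι R (BGen.s j))
  | eje (i j : Fin (n-1)) (h : (j:ℕ) = (i:ℕ)+1) :
      BRel R x n
        (FreeAlgebra.ι R (BGen.e i) * FreeAlgebra.ι R (BGen.e j) * FreeAlgebra.ι R (BGen.e i))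
        (FreeAlgebra.ι R (BGen.e i))
  | eje' (i j : Fin (n-1)) (h : (j:ℕ) = (i:ℕ)+1) :
      BRel R x n
        (FreeAlgebra.ι R (BGen.e j) * FreeAlgebra.ι R (BGen.e i) * FreeAlgebra.ι R (BGen.e j))
        (FreeAlgebra.ι R (BGen.e j))
  | see (i j : Fin (n-1)) (h : (j:ℕ) = (i:ℕ)+1) :
      BRel R x n
        (FreeAlgebra.ι R (BGen.s i) * FreeAlgebra.ι R (BGen.e j) * FreeAlgebra.ι R (BGen.e i))
        (FreeAlgebra.ι R (BGen.s j) * FreeAlgebra.ι R (BGen.e i))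
  | ees (i j : Fin (n-1)) (h : (j:ℕ) = (i:ℕ)+1) :
      BRel R x n
        (FreeAlgebra.ι R (BGen.e j) * FreeAlgebra.ι R (BGen.e i) * FreeAlgebra.ι R (BGen.s j))
        (FreeAlgebra.ι R (BGen.e j) * FreeAlgebra.ι R (BGen.s i))

/-- the Brauer algebra `B_n(x)` over `R`, presented by generators and relations. -/
abbrev BrauerAlg (R : Type) [CommRing R] (x : R) (n : ℕ) : Type := RingQuot (BRel R x n)

/-- the generator `s_i` of the Brauer algebra (0-based index). -/
def bS (R : Type) [CommRing R] (x : R) (n : ℕ) (i : Fin (n-1)) : BrauerAlg R x n :=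
  RingQuot.mkAlgHom R (BRel R x n) (FreeAlgebra.ι R (BGen.s i))

/-- the generator `e_i` of the Brauer algebra (0-based index). -/
def bE (R : Type) [CommRing R] (x : R) (n : ℕ) (i : Fin (n-1)) : BrauerAlg R x n :=
  RingQuot.mkAlgHom R (BRel R x n) (FreeAlgebra.ι R (BGen.e i))

/-- the element `E_f = e_1 e_3 ⋯ e_{2f-1}` of the Brauer algebra. -/
def EfB (R : Type) [CommRing R] (x : R) (n f : ℕ) (hf : 2*f ≤ n) : BrauerAlg R x n :=
  (List.ofFn (fun i : Fin f => bE R x n ⟨2*(i:ℕ), by have := i.isLt; omega⟩)).prod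

/-- the two-sided ideal `B^{(f)}` of the Brauer algebra generated by `E_f`
(it is `0` when `2f > n`, matching the convention of the paper). -/
def Bideal (R : Type) [CommRing R] (x : R) (n f : ℕ) : Submodule R (BrauerAlg R x n) :=
  Submodule.span R {y | ∃ (hf : 2*f ≤ n) (a b : BrauerAlg R x n), y = a * EfB R x n f hf * b}

/-- the operator on tensor space given by the right action of `E_f = e_1e_3⋯e_{2f-1}`. -/
def EfOp (R : Type) [CommRing R] (m n f : ℕ) (hf : 2*f ≤ n) :
    Module.End R (Ten R m n) :=
  (List.ofFn (fun i : Fin f => eOp R m n ⟨2*(i:ℕ), by have := i.isLt; omega⟩)).prod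

/-! ### Combinatorial predicates -/

/-- `σ ∈ S_{{2f+1, …, n}}`, i.e. `σ` fixes `1, …, 2f` pointwise (0-based). -/
def FixLow (n f : ℕ) (σ : Equiv.Perm (Fin n)) : Prop :=
  ∀ a : Fin n, (a:ℕ) < 2*f → σ a = a

/-- `σ ∈ S_{2f} = S_{{1, …, 2f}}`, i.e. `σ` fixes `2f+1, …, n` pointwise (0-based). -/
def FixHigh (n f : ℕ) (σ : Equiv.Perm (Fin n)) : Prop :=
  ∀ a : Fin n, 2*f ≤ (a:ℕ) → σ a = a

/-- membership in `D_{ν_f}`:  the bitableau `t^{ν_f}·d` is row standard and the first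
column of its first component is increasing (everything 0-based; `d a` is the entry
at the cell of `t^{ν_f}` containing `a`). -/
def DnuP (n f : ℕ) (d : Equiv.Perm (Fin n)) : Prop :=
  (∀ a b : Fin n, (a:ℕ) % 2 = 0 → (b:ℕ) = (a:ℕ)+1 → (b:ℕ) < 2*f → d a < d b) ∧
  (∀ a b : Fin n, (a:ℕ) % 2 = 0 → (b:ℕ) % 2 = 0 → (a:ℕ) < (b:ℕ) → (b:ℕ) < 2*f → d a < d b) ∧
  (∀ a b : Fin n, 2*f ≤ (a:ℕ) → (b:ℕ) = (a:ℕ)+1 → d a < d b)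

/-- membership in `D_f = D_{ν_f} ∩ S_{2f}`. -/
def DfP (n f : ℕ) (d : Equiv.Perm (Fin n)) : Prop :=
  DnuP n f d ∧ FixHigh n f d

/-- membership in the row stabilizer `S_{(2^f)}` of the initial `(2^f)`-tableau
(whose rows are `{1,2}, {3,4}, …, {2f-1,2f}`), inside `S_{2f} ≤ S_n`. -/
def RowStabP (n f : ℕ) (w : Equiv.Perm (Fin n)) : Prop :=
  FixHigh n f w ∧ ∀ a : Fin n, ((w a : ℕ))/2 = (a:ℕ)/2

/-- membership in `Ψ`, the normalizer of `S_{(2^f)}` in `S_{2f}`. -/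
def PsiP (n f : ℕ) (z : Equiv.Perm (Fin n)) : Prop :=
  FixHigh n f z ∧ ∀ w, RowStabP n f w ↔ RowStabP n f (z * w * z⁻¹)

/-- `d_J` for a `2f`-element subset `J ⊆ {1, …, n}`:  the unique permutation
enumerating `J` increasingly on the first `2f` positions and the complement of `J`
increasingly on the remaining positions. -/
def IsdJ (n f : ℕ) (J : Finset (Fin n)) (d : Equiv.Perm (Fin n)) : Prop :=
  (∀ a : Fin n, ((a:ℕ) < 2*f → d a ∈ J) ∧ (2*f ≤ (a:ℕ) → d a ∉ J)) ∧
  (∀ a b : Fin n, (a:ℕ) < (b:ℕ) → (b:ℕ) < 2*f → d a < d b) ∧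
  (∀ a b : Fin n, 2*f ≤ (a:ℕ) → (a:ℕ) < (b:ℕ) → d a < d b)

/-- membership in `S_{(2f, n-2f)} = S_{{1,…,2f}} × S_{{2f+1,…,n}}`. -/
def BlockP (n f : ℕ) (d : Equiv.Perm (Fin n)) : Prop :=
  ∀ a : Fin n, (a:ℕ) < 2*f ↔ ((d a : ℕ)) < 2*f

/-- the multi-index `c = (1, 1', 2, 2', …, f, f')`, completed by an
arbitrary multi-index `kk` on the positions `> 2f`. -/
def cIdx (m n f : ℕ) (hfm : f ≤ m) (kk : Fin n → Fin (2*m)) : Fin n → Fin (2*m) :=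
  fun p => if h : (p:ℕ) < 2*f then
    (if (p:ℕ) % 2 = 0 then (⟨(p:ℕ)/2, by omega⟩ : Fin (2*m))
     else conjIdx m ⟨(p:ℕ)/2, by omega⟩)
  else kk p

/-- the multi-index `ĉ = (f+1, (f+1)', …, 2f, (2f)') ∈ I(2m, 2f)`. -/
def cHatIdx (m f : ℕ) (hfm : 2*f ≤ m) : Fin (2*f) → Fin (2*m) :=
  fun p => if (p:ℕ) % 2 = 0 then (⟨f + (p:ℕ)/2, by have := p.isLt; omega⟩ : Fin (2*m))
           else conjIdx m ⟨f + (p:ℕ)/2, by have := p.isLt; omega⟩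

/-- membership in `I_f` (only the values at positions `> 2f` matter):
`2f+1 ≤ kk p ≤ m` (1-based) for all positions `p > 2f`. -/
def IfP (m n f : ℕ) (kk : Fin n → Fin (2*m)) : Prop :=
  ∀ p : Fin n, 2*f ≤ (p:ℕ) → 2*f ≤ ((kk p : ℕ)) ∧ ((kk p : ℕ)) < m

/-- the weight of a multi-index. -/
def wtOf (m k : ℕ) (a : Fin k → Fin (2*m)) : Fin (2*m) → ℕ :=
  fun j => (Finset.univ.filter (fun p => a p = j)).card

/-- the weight-`μ` component of an element of tensor space. -/
def wcomp (R : Type) [CommRing R] (m k : ℕ) (μ : Fin (2*m) → ℕ) (w : Ten R m k) :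
    Ten R m k :=
  fun a => if wtOf m k a = μ then w a else 0

/-- partial sums of a partition. -/
def psum (l : ℕ → ℕ) (r : ℕ) : ℕ := ∑ i ∈ Finset.range r, l i

/-- `l` represents a partition of `n - 2f` (parts listed weakly decreasingly). -/
def PartP (n f : ℕ) (l : ℕ → ℕ) : Prop :=
  (∀ i, l (i+1) ≤ l i) ∧ psum l n = n - 2*f ∧ ∀ i, n ≤ i → l i = 0

/-- membership in the Young subgroup `S_λ ≤ S_{{2f+1, …, n}}` stabilizing the rows of
the initial `λ`-tableau `t^λ` (with entries `2f+1, …, n`). -/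
def InSlam (n f : ℕ) (l : ℕ → ℕ) (w : Equiv.Perm (Fin n)) : Prop :=
  (∀ a : Fin n, (a:ℕ) < 2*f → w a = a) ∧
  (∀ (a : Fin n) (r : ℕ), 2*f + psum l r ≤ (a:ℕ) → (a:ℕ) < 2*f + psum l (r+1) →
     2*f + psum l r ≤ ((w a : ℕ)) ∧ ((w a : ℕ)) < 2*f + psum l (r+1))

/-- `d = d(t)` for a standard `λ`-tableau `t` with entries `2f+1, …, n`, i.e.
`d ∈ S_{{2f+1,…,n}}` and `t^λ · d` is standard. -/
def StdP (n f : ℕ) (l : ℕ → ℕ) (d : Equiv.Perm (Fin n)) : Prop :=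
  FixLow n f d ∧
  (∀ (a b : Fin n) (r c : ℕ), (a:ℕ) = 2*f + psum l r + c → c+1 < l r →
     (b:ℕ) = (a:ℕ)+1 → d a < d b) ∧
  (∀ (a b : Fin n) (r c : ℕ), (a:ℕ) = 2*f + psum l r + c → c < l (r+1) →
     (b:ℕ) = 2*f + psum l (r+1) + c → d a < d b)

/-- the embedding of the index set of the basis of `V` into that of `Ṽ`
(`v_i ↦ ṽ_i`, `v_{i'} ↦ ṽ_{i'}`). -/
def embIdx (m m0 : ℕ) (h : m ≤ m0) : Fin (2*m) → Fin (2*m0) :=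
  fun j => if (j:ℕ) < m then ⟨(j:ℕ), by have := j.isLt; omega⟩
           else ⟨(j:ℕ) + 2*(m0 - m), by have := j.isLt; omega⟩

/-- the inclusion `V^{⊗n} ↪ Ṽ^{⊗n}`. -/
def inclT (R : Type) [CommRing R] (m m0 n : ℕ) (h : m ≤ m0) :
    Ten R m n →ₗ[R] Ten R m0 n :=
  funMap R _ _ (fun (b : Fin n → Fin (2*m0)) (a : Fin n → Fin (2*m)) =>
    if b = embIdx m m0 h ∘ a then 1 else 0)

/-- the projection `π_K : Ṽ^{⊗n} ↠ V^{⊗n}` killing all basis tensors containing a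
factor `ṽ_i` or `ṽ_{i'}` with `m+1 ≤ i ≤ m_0`. -/
def projT (R : Type) [CommRing R] (m m0 n : ℕ) (h : m ≤ m0) :
    Ten R m0 n →ₗ[R] Ten R m n :=
  funMap R _ _ (fun (a : Fin n → Fin (2*m)) (b : Fin n → Fin (2*m0)) =>
    if b = embIdx m m0 h ∘ a then 1 else 0)





variable {n : ℕ}

def lowF (i : Fin (n-1)) : Fin n := ⟨(i:ℕ), by have := i.isLt; omega⟩
def hiF (i : Fin (n-1)) : Fin n := ⟨(i:ℕ)+1, by have := i.isLt; omega⟩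
def tauP (i : Fin (n-1)) : Equiv.Perm (Fin n) := Equiv.swap (lowF i) (hiF i)

lemma lowF_ne_hiF (i : Fin (n-1)) : lowF i ≠ hiF i := by
  simp [lowF, hiF, Fin.ext_iff]

lemma tauP_sq (i : Fin (n-1)) : tauP i * tauP i = 1 := Equiv.swap_mul_self _ _

lemma tauP_coe (i : Fin (n-1)) (p : Fin n) :
    ((tauP i p : Fin n) : ℕ) = if (p:ℕ) = (i:ℕ) then (i:ℕ)+1
      else if (p:ℕ) = (i:ℕ)+1 then (i:ℕ) else (p:ℕ) := by
  rcases eq_or_ne p (lowF i) with h | h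
  · subst h; rw [tauP, Equiv.swap_apply_left]; simp [lowF, hiF]
  · rcases eq_or_ne p (hiF i) with h2 | h2
    · subst h2; rw [tauP, Equiv.swap_apply_right]; simp [lowF, hiF]
    · rw [tauP, Equiv.swap_apply_of_ne_of_ne h h2]
      rw [Fin.ne_iff_vne] at h h2
      simp only [lowF, hiF] at h h2
      rw [if_neg h, if_neg h2]

lemma tauP_apply_other (i : Fin (n-1)) (p : Fin n) (h1 : (p:ℕ) ≠ (i:ℕ))
    (h2 : (p:ℕ) ≠ (i:ℕ)+1) : tauP i p = p := by
  apply Fin.ext; rw [tauP_coe, if_neg h1, if_neg h2]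

lemma tauP_low (i : Fin (n-1)) : tauP i (lowF i) = hiF i := Equiv.swap_apply_left _ _
lemma tauP_hi (i : Fin (n-1)) : tauP i (hiF i) = lowF i := Equiv.swap_apply_right _ _

lemma tauP_comm (i j : Fin (n-1)) (h : (i:ℕ)+1 < (j:ℕ)) :
    tauP i * tauP j = tauP j * tauP i := by
  have key : tauP i * tauP j * (tauP i)⁻¹ = tauP j := by
    have e1 : tauP i * tauP j * (tauP i)⁻¹
        = Equiv.swap (tauP i (lowF j)) (tauP i (hiF j)) :=
      (Equiv.swap_apply_apply _ _ _).symm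
    rw [e1, tauP_apply_other i (lowF j) (by simp [lowF]; omega) (by simp [lowF]; omega),
      tauP_apply_other i (hiF j) (by simp [hiF]; omega) (by simp [hiF]; omega)]
    rfl
  calc tauP i * tauP j = tauP i * tauP j * (tauP i)⁻¹ * tauP i := by group
  _ = tauP j * tauP i := by rw [key]

lemma tauP_braid (i j : Fin (n-1)) (h : (j:ℕ) = (i:ℕ)+1) :
    tauP i * tauP j * tauP i = tauP j * tauP i * tauP j := by
  have hinv : (tauP i)⁻¹ = tauP i := Equiv.swap_inv _ _
  have hinvj : (tauP j)⁻¹ = tauP j := Equiv.swap_inv _ _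
  have e1 : tauP i * tauP j * tauP i = Equiv.swap (tauP i (lowF j)) (tauP i (hiF j)) := by
    conv_lhs => rw [show tauP i = (tauP i)⁻¹ from hinv.symm]
    exact (Equiv.swap_apply_apply _ _ _).symm
  have e2 : tauP j * tauP i * tauP j = Equiv.swap (tauP j (lowF i)) (tauP j (hiF i)) := by
    conv_lhs => rw [show tauP j = (tauP j)⁻¹ from hinvj.symm]
    exact (Equiv.swap_apply_apply _ _ _).symm
  rw [e1, e2]
  have h1 : tauP i (lowF j) = lowF i := by
    have : lowF j = hiF i := by simp [lowF, hiF, Fin.ext_iff, h]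
    rw [this, tauP_hi]
  have h2 : tauP i (hiF j) = hiF j := tauP_apply_other _ _ (by simp [hiF]; omega) (by simp [hiF]; omega)
  have h3 : tauP j (lowF i) = lowF i := tauP_apply_other _ _ (by simp [lowF]; omega) (by simp [lowF]; omega)
  have h4 : tauP j (hiF i) = hiF j := by
    have : hiF i = lowF j := by simp [lowF, hiF, Fin.ext_iff, h]
    rw [this, tauP_low]
  rw [h1, h2, h3, h4]

/-- inversion number -/
def invF (π : Equiv.Perm (Fin n)) : ℕ :=
  (Finset.univ.filter (fun pq : Fin n × Fin n => pq.1 < pq.2 ∧ π pq.2 < π pq.1)).card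

def descents (π : Equiv.Perm (Fin n)) : Finset (Fin (n-1)) :=
  Finset.univ.filter (fun i => π (hiF i) < π (lowF i))

lemma mem_descents {π : Equiv.Perm (Fin n)} {i : Fin (n-1)} :
    i ∈ descents π ↔ π (hiF i) < π (lowF i) := by simp [descents]

lemma invF_decr {π : Equiv.Perm (Fin n)} {i : Fin (n-1)} (h : i ∈ descents π) :
    invF (π * tauP i) < invF π := by
  rw [mem_descents] at h
  set S := (Finset.univ.filter (fun pq : Fin n × Fin n => pq.1 < pq.2 ∧ π pq.2 < π pq.1))
  set S' := (Finset.univ.filter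
    (fun pq : Fin n × Fin n => pq.1 < pq.2 ∧ (π * tauP i) pq.2 < (π * tauP i) pq.1))
  have hmem : (lowF i, hiF i) ∈ S := by
    simp only [S, Finset.mem_filter, Finset.mem_univ, true_and]
    exact ⟨by simp [lowF, hiF, Fin.lt_def], h⟩
  have hcard : invF (π * tauP i) ≤ (S.erase (lowF i, hiF i)).card := by
    apply Finset.card_le_card_of_injOn (fun pq => (tauP i pq.1, tauP i pq.2))
    · rintro ⟨p, q⟩ hpq
      replace hpq : p < q ∧ π (tauP i q) < π (tauP i p) :=
        (Finset.mem_filter.1 (Finset.mem_coe.1 hpq)).2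
      obtain ⟨hlt, hval⟩ := hpq
      have hne : ¬((p:ℕ) = (i:ℕ) ∧ (q:ℕ) = (i:ℕ)+1) := by
        rintro ⟨hp, hq⟩
        have hp' : p = lowF i := Fin.ext hp
        have hq' : q = hiF i := Fin.ext hq
        rw [hp', hq', tauP_low, tauP_hi] at hval
        exact absurd h (not_lt.2 (le_of_lt hval))
      refine Finset.mem_erase.2 ⟨?_, ?_⟩
      · intro hcon
        have h1 : tauP i p = lowF i := congrArg Prod.fst hcon
        have h2 : tauP i q = hiF i := congrArg Prod.snd hcon
        rw [← tauP_hi i, Equiv.apply_eq_iff_eq] at h1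
        rw [← tauP_low i, Equiv.apply_eq_iff_eq] at h2
        rw [h1, h2] at hlt
        simp [Fin.lt_def, lowF, hiF] at hlt
      · simp only [S, Finset.mem_filter, Finset.mem_univ, true_and]
        constructor
        · rw [Fin.lt_def, tauP_coe, tauP_coe]
          rw [Fin.lt_def] at hlt
          split_ifs <;> omega
        · exact hval
    · rintro ⟨p, q⟩ _ ⟨p', q'⟩ _ hcon
      have h1 : tauP i p = tauP i p' := congrArg Prod.fst hcon
      have h2 : tauP i q = tauP i q' := congrArg Prod.snd hcon
      rw [Equiv.apply_eq_iff_eq] at h1 h2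
      simp [h1, h2]
  calc invF (π * tauP i) ≤ (S.erase (lowF i, hiF i)).card := hcard
  _ < S.card := Finset.card_erase_lt_of_mem hmem
  _ = invF π := rfl

lemma descents_one : descents (1 : Equiv.Perm (Fin n)) = ∅ := by
  ext i
  simp [descents, Fin.lt_def, lowF, hiF]

lemma eq_one_of_descents_empty {π : Equiv.Perm (Fin n)} (h : descents π = ∅) : π = 1 := by
  have hadj : ∀ i : Fin (n-1), π (lowF i) < π (hiF i) := by
    intro i
    have h1 : ¬ π (hiF i) < π (lowF i) := by
      intro hc
      have : i ∈ descents π := mem_descents.2 hc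
      rw [h] at this; exact absurd this (Finset.notMem_empty _)
    have h2 : π (lowF i) ≠ π (hiF i) := fun hc =>
      (lowF_ne_hiF i) (π.injective hc)
    exact lt_of_le_of_ne (not_lt.1 h1) h2
  have hadj' : ∀ a b : Fin n, (b:ℕ) = (a:ℕ)+1 → π a < π b := by
    intro a b hab
    have hlt : (a:ℕ) < n - 1 := by have := b.isLt; omega
    have := hadj ⟨(a:ℕ), hlt⟩
    have ha : lowF ⟨(a:ℕ), hlt⟩ = a := Fin.ext rfl
    have hb : hiF ⟨(a:ℕ), hlt⟩ = b := Fin.ext (by simp [hiF, hab])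
    rwa [ha, hb] at this
  have hmono : StrictMono π := by
    have key : ∀ k : ℕ, ∀ a b : Fin n, (b:ℕ) = (a:ℕ)+(k+1) → π a < π b := by
      intro k
      induction k with
      | zero => intro a b hab; exact hadj' a b hab
      | succ k ih =>
        intro a b hab
        have hmid : (a:ℕ)+(k+1) < n := by have := b.isLt; omega
        exact lt_trans (ih a ⟨(a:ℕ)+(k+1), hmid⟩ rfl)
          (hadj' ⟨(a:ℕ)+(k+1), hmid⟩ b (by omega))
    intro a b hab
    rw [Fin.lt_def] at hab
    obtain ⟨k, hk⟩ : ∃ k, (b:ℕ) = (a:ℕ)+(k+1) := ⟨(b:ℕ)-(a:ℕ)-1, by omega⟩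
    exact key k a b hk
  ext a
  have h1 := Fin.coe_orderIso_apply (StrictMono.orderIsoOfSurjective π hmono π.surjective) a
  simpa using h1


section Mats
variable {M : Type} [Monoid M]

noncomputable def FF (t : Fin (n-1) → M) (π : Equiv.Perm (Fin n)) : M :=
  if h : (descents π).Nonempty then
    FF t (π * tauP ((descents π).min' h)) * t ((descents π).min' h)
  else 1
termination_by invF π
decreasing_by exact invF_decr ((descents π).min'_mem h)

lemma FF_pos (t : Fin (n-1) → M) {π : Equiv.Perm (Fin n)} (h : (descents π).Nonempty) :
    FF t π = FF t (π * tauP ((descents π).min' h)) * t ((descents π).min' h) := by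
  rw [FF, dif_pos h]

lemma FF_empty (t : Fin (n-1) → M) {π : Equiv.Perm (Fin n)} (h : ¬ (descents π).Nonempty) :
    FF t π = 1 := by
  rw [FF, dif_neg h]

lemma FF_one (t : Fin (n-1) → M) : FF t (1 : Equiv.Perm (Fin n)) = 1 :=
  FF_empty t (by simp [descents_one])

variable {t : Fin (n-1) → M}

theorem FF_desc
    (hbraid : ∀ i j : Fin (n-1), (j:ℕ) = (i:ℕ)+1 → t i * t j * t i = t j * t i * t j)
    (hcomm : ∀ i j : Fin (n-1), (i:ℕ)+1 < (j:ℕ) → t i * t j = t j * t i) : ∀ π : Equiv.Perm (Fin n), ∀ i ∈ descents π, FF t π = FF t (π * tauP i) * t i := by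
  suffices H : ∀ N : ℕ, ∀ π : Equiv.Perm (Fin n), invF π ≤ N →
      ∀ i ∈ descents π, FF t π = FF t (π * tauP i) * t i by
    intro π i hi; exact H (invF π) π le_rfl i hi
  intro N
  induction N with
  | zero =>
    intro π hπ i hi
    exact absurd (invF_decr hi) (by omega)
  | succ N ih =>
    intro π hπ i hi
    have hne : (descents π).Nonempty := ⟨i, hi⟩
    set j := (descents π).min' hne with hjdef
    have hj : j ∈ descents π := (descents π).min'_mem hne
    have hdef : FF t π = FF t (π * tauP j) * t j := FF_pos t hne
    rcases lt_or_eq_of_le ((descents π).min'_le i hi) with hlt | heq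
    swap
    · rw [← heq] at hi ⊢; exact hdef
    have hji : (j:ℕ) < (i:ℕ) := hlt
    rcases eq_or_lt_of_le (Nat.succ_le_of_lt hji) with hji2 | hji3
    · -- adjacent case : (i:ℕ) = (j:ℕ)+1
      have hji2 : (i:ℕ) = (j:ℕ)+1 := hji2.symm
      have hlij : lowF i = hiF j := Fin.ext (by simp [lowF, hiF, hji2])
      -- tau actions
      have tj_hi_i : tauP j (hiF i) = hiF i :=
        tauP_apply_other _ _ (by simp [hiF]; omega) (by simp [hiF]; omega)
      have ti_low_j : tauP i (lowF j) = lowF j :=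
        tauP_apply_other _ _ (by simp [lowF]; omega) (by simp [lowF]; omega)
      -- values
      have hBA : π (hiF j) < π (lowF j) := mem_descents.1 hj
      have hCB : π (hiF i) < π (hiF j) := by
        have := mem_descents.1 hi; rwa [hlij] at this
      -- chain 1
      have d1 : i ∈ descents (π * tauP j) := by
        rw [mem_descents]
        simp only [Equiv.Perm.mul_apply]
        rw [tj_hi_i, hlij, tauP_hi]
        exact lt_trans hCB hBA
      have hinv1 : invF (π * tauP j) ≤ N := by
        have := invF_decr hj; omega
      have e1 := ih (π * tauP j) hinv1 i d1
      have d2 : j ∈ descents (π * tauP j * tauP i) := by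
        rw [mem_descents]
        simp only [Equiv.Perm.mul_apply]
        rw [← hlij, tauP_low, tj_hi_i, ti_low_j, tauP_low]
        exact hCB
      have hinv2 : invF (π * tauP j * tauP i) ≤ N := by
        have := invF_decr d1; have := invF_decr hj; omega
      have e2 := ih (π * tauP j * tauP i) hinv2 j d2
      -- chain 2
      have d3 : j ∈ descents (π * tauP i) := by
        rw [mem_descents]
        simp only [Equiv.Perm.mul_apply]
        rw [← hlij, tauP_low, ti_low_j]
        exact lt_trans hCB hBA
      have hinv3 : invF (π * tauP i) ≤ N := by
        have := invF_decr hi; omega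
      have e3 := ih (π * tauP i) hinv3 j d3
      have d4 : i ∈ descents (π * tauP i * tauP j) := by
        rw [mem_descents]
        simp only [Equiv.Perm.mul_apply]
        rw [tj_hi_i, tauP_hi, hlij, tauP_hi, ti_low_j]
        exact hBA
      have hinv4 : invF (π * tauP i * tauP j) ≤ N := by
        have := invF_decr d3; have := invF_decr hi; omega
      have e4 := ih (π * tauP i * tauP j) hinv4 i d4
      have hperm : π * tauP j * tauP i * tauP j = π * tauP i * tauP j * tauP i := by
        simp only [mul_assoc]
        rw [show tauP j * (tauP i * tauP j) = tauP i * (tauP j * tauP i) from by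
          simpa [mul_assoc] using tauP_braid j i hji2]
      rw [hdef, e1, e2, e3, e4, hperm]
      simp only [mul_assoc]
      rw [show t j * (t i * t j) = t i * (t j * t i) from by
        simpa [mul_assoc] using hbraid j i hji2]
    · -- commuting case : (j:ℕ)+1 < (i:ℕ)
      have d1 : i ∈ descents (π * tauP j) := by
        rw [mem_descents]
        simp only [Equiv.Perm.mul_apply]
        rw [tauP_apply_other j (hiF i) (by simp [hiF]; omega) (by simp [hiF]; omega),
          tauP_apply_other j (lowF i) (by simp [lowF]; omega) (by simp [lowF]; omega)]
        exact mem_descents.1 hi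
      have hinv1 : invF (π * tauP j) ≤ N := by have := invF_decr hj; omega
      have e1 := ih (π * tauP j) hinv1 i d1
      have d2 : j ∈ descents (π * tauP i) := by
        rw [mem_descents]
        simp only [Equiv.Perm.mul_apply]
        rw [tauP_apply_other i (hiF j) (by simp [hiF]; omega) (by simp [hiF]; omega),
          tauP_apply_other i (lowF j) (by simp [lowF]; omega) (by simp [lowF]; omega)]
        exact mem_descents.1 hj
      have hinv2 : invF (π * tauP i) ≤ N := by have := invF_decr hi; omega
      have e2 := ih (π * tauP i) hinv2 j d2
      have hperm : π * tauP j * tauP i = π * tauP i * tauP j := by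
        simp only [mul_assoc]
        rw [tauP_comm j i hji3]
      rw [hdef, e1, hperm, e2]
      simp only [mul_assoc]
      rw [hcomm j i hji3]

theorem FF_step
    (hbraid : ∀ i j : Fin (n-1), (j:ℕ) = (i:ℕ)+1 → t i * t j * t i = t j * t i * t j)
    (hcomm : ∀ i j : Fin (n-1), (i:ℕ)+1 < (j:ℕ) → t i * t j = t j * t i)
    (hss : ∀ i : Fin (n-1), t i * t i = 1) : ∀ (π : Equiv.Perm (Fin n)) (i : Fin (n-1)),
    FF t (π * tauP i) = FF t π * t i := by
  intro π i
  by_cases hd : i ∈ descents π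
  · rw [FF_desc hbraid hcomm π i hd, mul_assoc, hss, mul_one]
  · have hd' : i ∈ descents (π * tauP i) := by
      rw [mem_descents]
      simp only [Equiv.Perm.mul_apply]
      rw [tauP_hi, tauP_low]
      rw [mem_descents, not_lt] at hd
      refine lt_of_le_of_ne hd ?_
      intro hcon
      exact lowF_ne_hiF i (π.injective hcon)
    have := FF_desc hbraid hcomm (π * tauP i) i hd'
    rwa [mul_assoc, tauP_sq, mul_one] at this

theorem FF_mul
    (hbraid : ∀ i j : Fin (n-1), (j:ℕ) = (i:ℕ)+1 → t i * t j * t i = t j * t i * t j)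
    (hcomm : ∀ i j : Fin (n-1), (i:ℕ)+1 < (j:ℕ) → t i * t j = t j * t i)
    (hss : ∀ i : Fin (n-1), t i * t i = 1) : ∀ (π' π : Equiv.Perm (Fin n)), FF t (π * π') = FF t π * FF t π' := by
  suffices H : ∀ N : ℕ, ∀ π' : Equiv.Perm (Fin n), invF π' ≤ N →
      ∀ π, FF t (π * π') = FF t π * FF t π' by
    intro π' π; exact H (invF π') π' le_rfl π
  intro N
  induction N with
  | zero =>
    intro π' hπ' π
    have : descents π' = ∅ := by
      by_contra hne
      obtain ⟨i, hi⟩ := Finset.nonempty_iff_ne_empty.2 hne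
      exact absurd (invF_decr hi) (by omega)
    rw [eq_one_of_descents_empty this, mul_one, FF_one, mul_one]
  | succ N ih =>
    intro π' hπ' π
    rcases Finset.eq_empty_or_nonempty (descents π') with hemp | ⟨i, hi⟩
    · rw [eq_one_of_descents_empty hemp, mul_one, FF_one, mul_one]
    · have hback : π' * tauP i * tauP i = π' := by rw [mul_assoc, tauP_sq, mul_one]
      have hinv : invF (π' * tauP i) ≤ N := by have := invF_decr hi; omega
      calc FF t (π * π') = FF t (π * (π' * tauP i) * tauP i) := by
            rw [mul_assoc, mul_assoc, tauP_sq, mul_one]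
      _ = FF t (π * (π' * tauP i)) * t i := FF_step hbraid hcomm hss _ i
      _ = FF t π * FF t (π' * tauP i) * t i := by rw [ih (π' * tauP i) hinv π]
      _ = FF t π * (FF t (π' * tauP i) * t i) := by rw [mul_assoc]
      _ = FF t π * FF t π' := by
            rw [← FF_step hbraid hcomm hss (π' * tauP i) i, hback]

end Mats


/-! ### Brauer algebra relations and ideal lemmas -/

section BrauerLemmas
variable (R : Type) [CommRing R] (x : R) (n : ℕ)

lemma brel_eq {a b : FreeAlgebra R (BGen n)} (h : BRel R x n a b) :
    RingQuot.mkAlgHom R (BRel R x n) a = RingQuot.mkAlgHom R (BRel R x n) b :=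
  RingQuot.mkAlgHom_rel R h

lemma bS_mul_self (i : Fin (n-1)) : bS R x n i * bS R x n i = 1 := by
  have := brel_eq R x n (BRel.ss (R := R) (x := x) (n := n) i)
  rw [map_mul, map_one] at this
  exact this

lemma bS_comm (i j : Fin (n-1)) (h : (i:ℕ)+1 < (j:ℕ)) :
    bS R x n i * bS R x n j = bS R x n j * bS R x n i := by
  have := brel_eq R x n (BRel.ssComm (R := R) (x := x) (n := n) i j h)
  rw [map_mul, map_mul] at this
  exact this

lemma bS_braid (i j : Fin (n-1)) (h : (j:ℕ) = (i:ℕ)+1) :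
    bS R x n i * bS R x n j * bS R x n i = bS R x n j * bS R x n i * bS R x n j := by
  have := brel_eq R x n (BRel.braid (R := R) (x := x) (n := n) i j h)
  rw [map_mul, map_mul, map_mul, map_mul] at this
  exact this

lemma bE_eje' (i j : Fin (n-1)) (h : (j:ℕ) = (i:ℕ)+1) :
    bE R x n j * bE R x n i * bE R x n j = bE R x n j := by
  have := brel_eq R x n (BRel.eje' (R := R) (x := x) (n := n) i j h)
  rw [map_mul, map_mul] at this
  exact this

lemma Bideal_mul_left (z : BrauerAlg R x n) {v : BrauerAlg R x n}
    (hv : v ∈ Bideal R x n 1) : z * v ∈ Bideal R x n 1 := by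
  induction hv using Submodule.span_induction with
  | mem w hw =>
    obtain ⟨hf, a, b, rfl⟩ := hw
    apply Submodule.subset_span
    exact ⟨hf, z * a, b, by simp only [mul_assoc]⟩
  | zero => rw [mul_zero]; exact (Bideal R x n 1).zero_mem
  | add u w _ _ hu hw => rw [mul_add]; exact (Bideal R x n 1).add_mem hu hw
  | smul c u _ hu => rw [mul_smul_comm]; exact (Bideal R x n 1).smul_mem c hu

lemma Bideal_mul_right (z : BrauerAlg R x n) {v : BrauerAlg R x n}
    (hv : v ∈ Bideal R x n 1) : v * z ∈ Bideal R x n 1 := by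
  induction hv using Submodule.span_induction with
  | mem w hw =>
    obtain ⟨hf, a, b, rfl⟩ := hw
    apply Submodule.subset_span
    exact ⟨hf, a, b * z, by simp only [mul_assoc]⟩
  | zero => rw [zero_mul]; exact (Bideal R x n 1).zero_mem
  | add u w _ _ hu hw => rw [add_mul]; exact (Bideal R x n 1).add_mem hu hw
  | smul c u _ hu => rw [smul_mul_assoc]; exact (Bideal R x n 1).smul_mem c hu

lemma EfB_one (hf : 2*1 ≤ n) : EfB R x n 1 hf = bE R x n ⟨0, by omega⟩ := by
  rw [EfB, List.ofFn_succ, List.ofFn_zero, List.prod_singleton]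
  exact congrArg _ (Fin.ext rfl)

lemma bE_mem_Bideal (i : Fin (n-1)) : bE R x n i ∈ Bideal R x n 1 := by
  have hn2 : 2 ≤ n := by have := i.isLt; omega
  suffices H : ∀ k : ℕ, ∀ i : Fin (n-1), (i:ℕ) = k → bE R x n i ∈ Bideal R x n 1 by
    exact H (i:ℕ) i rfl
  intro k
  induction k with
  | zero =>
    intro i hi
    have hi0 : i = ⟨0, by omega⟩ := Fin.ext hi
    apply Submodule.subset_span
    refine ⟨by omega, 1, 1, ?_⟩
    rw [EfB_one, one_mul, mul_one]
    exact congrArg _ hi0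
  | succ k ih =>
    intro i hi
    have hk : k < n - 1 := by have := i.isLt; omega
    have hik : bE R x n i * bE R x n ⟨k, hk⟩ * bE R x n i = bE R x n i :=
      bE_eje' R x n ⟨k, hk⟩ i (by simp [hi])
    rw [← hik]
    exact Bideal_mul_right R x n _ (Bideal_mul_left R x n _ (ih ⟨k, hk⟩ rfl))

end BrauerLemmas




/-! ### Tensor space computations -/

section TenLemmas
variable (R : Type) [CommRing R] (m n : ℕ)

lemma funMap_dta {α β : Type} [Fintype α] (M : β → α → R) (i : α) (b : β) :
    funMap R α β M (fun a => if a = i then (1:R) else 0) b = M b i := by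
  show (∑ a, M b a * if a = i then (1:R) else 0) = M b i
  rw [Finset.sum_eq_single i]
  · rw [if_pos rfl, mul_one]
  · intro c _ hc; rw [if_neg hc, mul_zero]
  · intro hcon; exact absurd (Finset.mem_univ i) hcon

/-- indices all of whose pairs are non-conjugate -/
def GoodIdx (a : Fin n → Fin (2*m)) : Prop :=
  ∀ p q : Fin n, ((a p):ℕ) + ((a q):ℕ) + 1 ≠ 2*m

lemma GoodIdx_comp {a : Fin n → Fin (2*m)} (h : GoodIdx m n a) (g : Fin n → Fin n) :
    GoodIdx m n (a ∘ g) := fun p q => h (g p) (g q)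

lemma sOp_dta (j : Fin (n-1)) (a : Fin n → Fin (2*m)) :
    sOp R m n j (dta R m n a) = - dta R m n (a ∘ tauP j) := by
  funext o
  have hinv : ∀ p : Fin n, tauP j (tauP j p) = p := fun p => Equiv.swap_apply_self _ _ _
  have hiff : ∀ u v : Fin n → Fin (2*m), u = v ∘ (tauP j) → v = u ∘ (tauP j) := by
    intro u v huv
    funext p
    have := congrFun huv (tauP j p)
    simp only [Function.comp_apply, hinv] at this ⊢
    exact this.symm
  show (∑ b : Fin n → Fin (2*m), (if b = o ∘ (tauP j) then (-1:R) else 0) *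
      (if b = a then (1:R) else 0)) = (- dta R m n (a ∘ (tauP j))) o
  rw [Finset.sum_eq_single a]
  · rw [show (if a = a then (1:R) else 0) = 1 from if_pos rfl, mul_one]
    by_cases h : a = o ∘ (tauP j)
    · rw [if_pos h]
      show (-1 : R) = -(if o = a ∘ (tauP j) then (1:R) else 0)
      rw [if_pos (hiff a o h)]
    · rw [if_neg h]
      show (0 : R) = -(if o = a ∘ (tauP j) then (1:R) else 0)
      rw [if_neg (fun hc => h (hiff o a hc)), neg_zero]
  · intro c _ hc; rw [if_neg hc, mul_zero]
  · intro hcon; exact absurd (Finset.mem_univ a) hcon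

lemma eOp_dta (j : Fin (n-1)) (a : Fin n → Fin (2*m)) (h : GoodIdx m n a) :
    eOp R m n j (dta R m n a) = 0 := by
  funext o
  show (∑ b : Fin n → Fin (2*m),
      ((if ∀ p : Fin n, p ≠ (⟨(j:ℕ), by have := j.isLt; omega⟩ : Fin n) →
          p ≠ (⟨(j:ℕ)+1, by have := j.isLt; omega⟩ : Fin n) → b p = o p then (1:R) else 0) *
       (-((epsZ m (o ⟨(j:ℕ), by have := j.isLt; omega⟩) (o ⟨(j:ℕ)+1, by have := j.isLt; omega⟩) : ℤ) : R)) *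
       ((epsZ m (b ⟨(j:ℕ), by have := j.isLt; omega⟩) (b ⟨(j:ℕ)+1, by have := j.isLt; omega⟩) : ℤ) : R)) *
      (if b = a then (1:R) else 0)) = (0 : Ten R m n) o
  rw [Finset.sum_eq_single a]
  · have hz : epsZ m (a ⟨(j:ℕ), by have := j.isLt; omega⟩)
        (a ⟨(j:ℕ)+1, by have := j.isLt; omega⟩) = 0 := by
      rw [epsZ, if_neg (h _ _)]
    rw [hz]
    show _ * ((0:ℤ):R) * _ = (0 : Ten R m n) o
    rw [Int.cast_zero, mul_zero, zero_mul]
    rfl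
  · intro c _ hc; rw [if_neg hc, mul_zero]
  · intro hcon; exact absurd (Finset.mem_univ a) hcon

/-- the span of good basis tensors -/
def UU : Submodule R (Ten R m n) :=
  Submodule.span R {f : Ten R m n | ∃ a, GoodIdx m n a ∧ f = dta R m n a}

lemma dta_mem_UU {a : Fin n → Fin (2*m)} (h : GoodIdx m n a) :
    dta R m n a ∈ UU R m n :=
  Submodule.subset_span ⟨a, h, rfl⟩

lemma sOp_mem_UU (j : Fin (n-1)) {u : Ten R m n} (hu : u ∈ UU R m n) :
    sOp R m n j u ∈ UU R m n := by
  induction hu using Submodule.span_induction with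
  | mem f hf =>
    obtain ⟨a, ha, rfl⟩ := hf
    rw [sOp_dta]
    exact (UU R m n).neg_mem (dta_mem_UU R m n (GoodIdx_comp m n ha _))
  | zero => rw [map_zero]; exact (UU R m n).zero_mem
  | add u v _ _ hu hv => rw [map_add]; exact (UU R m n).add_mem hu hv
  | smul c u _ hu => rw [map_smul]; exact (UU R m n).smul_mem c hu

lemma eOp_eq_zero_UU (j : Fin (n-1)) {u : Ten R m n} (hu : u ∈ UU R m n) :
    eOp R m n j u = 0 := by
  induction hu using Submodule.span_induction with
  | mem f hf =>
    obtain ⟨a, ha, rfl⟩ := hf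
    exact eOp_dta R m n j a ha
  | zero => rw [map_zero]
  | add u v _ _ hu hv => rw [map_add, hu, hv, add_zero]
  | smul c u _ hu => rw [map_smul, hu, smul_zero]

end TenLemmas

section Preserve

variable (K : Type) [Field K] (m n : ℕ)
  (φ : (BrauerAlg K (-(2*m : K)) n)ᵐᵒᵖ →ₐ[K] Module.End K (Ten K m n))

lemma phi_preserves_UU
    (hs : ∀ i, φ (op (bS K (-(2*m : K)) n i)) = sOp K m n i)
    (he : ∀ i, φ (op (bE K (-(2*m : K)) n i)) = eOp K m n i)
    (z : BrauerAlg K (-(2*m : K)) n) :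
    ∀ u ∈ UU K m n, φ (op z) u ∈ UU K m n := by
  obtain ⟨w, rfl⟩ := RingQuot.mkAlgHom_surjective K (BRel K (-(2*m : K)) n) z
  induction w using FreeAlgebra.induction with
  | grade0 r =>
    intro u hu
    rw [AlgHom.commutes, ← MulOpposite.algebraMap_apply, AlgHom.commutes,
      Algebra.algebraMap_eq_smul_one]
    rw [LinearMap.smul_apply, Module.End.one_apply]
    exact (UU K m n).smul_mem r hu
  | grade1 g =>
    intro u hu
    cases g with
    | s i =>
      have : RingQuot.mkAlgHom K (BRel K (-(2*m : K)) n) (FreeAlgebra.ι K (BGen.s i))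
          = bS K (-(2*m : K)) n i := rfl
      rw [this, hs i]
      exact sOp_mem_UU K m n i hu
    | e i =>
      have : RingQuot.mkAlgHom K (BRel K (-(2*m : K)) n) (FreeAlgebra.ι K (BGen.e i))
          = bE K (-(2*m : K)) n i := rfl
      rw [this, he i, eOp_eq_zero_UU K m n i hu]
      exact (UU K m n).zero_mem
  | mul w1 w2 ih1 ih2 =>
    intro u hu
    rw [map_mul, op_mul, map_mul, Module.End.mul_apply]
    exact ih2 _ (ih1 u hu)
  | add w1 w2 ih1 ih2 =>
    intro u hu
    rw [map_add, op_add, map_add, LinearMap.add_apply]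
    exact (UU K m n).add_mem (ih1 u hu) (ih2 u hu)

end Preserve

/-- Let `K` be a field and `m ≥ n`.  Then the annihilator of tensor
space in the Brauer algebra is contained in the two-sided ideal `B^{(1)}` generated
by `e_1`. -/
theorem annihilator_in_B1
    (K : Type) [Field K] (m n : ℕ) (hn : 0 < n) (hmn : n ≤ m)
    (φ : (BrauerAlg K (-(2*m : K)) n)ᵐᵒᵖ →ₐ[K] Module.End K (Ten K m n))
    (hs : ∀ i, φ (op (bS K (-(2*m : K)) n i)) = sOp K m n i)
    (he : ∀ i, φ (op (bE K (-(2*m : K)) n i)) = eOp K m n i) :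
    ∀ y : BrauerAlg K (-(2*m : K)) n,
      φ (op y) = 0 → y ∈ Bideal K (-(2*m : K)) n 1 := by
  intro y hy
  -- the low multi-index c = (1, 2, ..., n)
  set cc : Fin n → Fin (2*m) := (fun p => ⟨(p:ℕ), by have := p.isLt; omega⟩ : Fin n → Fin (2*m))
    with hccdef
  have hgood : GoodIdx m n cc := by
    intro p q
    have hp := p.isLt; have hq := q.isLt
    simp only [hccdef]
    omega
  have hbraidB : ∀ i j : Fin (n-1), (j:ℕ) = (i:ℕ)+1 →
      bS K (-(2*m : K)) n i * bS K (-(2*m : K)) n j * bS K (-(2*m : K)) n i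
        = bS K (-(2*m : K)) n j * bS K (-(2*m : K)) n i * bS K (-(2*m : K)) n j :=
    fun i j h => bS_braid K _ n i j h
  have hcommB : ∀ i j : Fin (n-1), (i:ℕ)+1 < (j:ℕ) →
      bS K (-(2*m : K)) n i * bS K (-(2*m : K)) n j
        = bS K (-(2*m : K)) n j * bS K (-(2*m : K)) n i :=
    fun i j h => bS_comm K _ n i j h
  have hssB : ∀ i : Fin (n-1), bS K (-(2*m : K)) n i * bS K (-(2*m : K)) n i = 1 :=
    fun i => bS_mul_self K _ n i
  -- evaluation at the basis tensor v_c, as a linear map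
  set Φl : BrauerAlg K (-(2*m : K)) n →ₗ[K] Ten K m n :=
    { toFun := fun z => φ (op z) (dta K m n cc)
      map_add' := fun z1 z2 => by
        show φ (op (z1 + z2)) (dta K m n cc)
          = φ (op z1) (dta K m n cc) + φ (op z2) (dta K m n cc)
        rw [op_add, map_add, LinearMap.add_apply]
      map_smul' := fun r z => by
        show φ (op (r • z)) (dta K m n cc) = r • φ (op z) (dta K m n cc)
        rw [op_smul, map_smul, LinearMap.smul_apply] }
    with hPhidef
  -- value of Φl on straightened symmetric-group elements
  have hPhiF : ∀ π : Equiv.Perm (Fin n),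
      Φl (FF (bS K (-(2*m : K)) n) π) = ((Equiv.Perm.sign π : ℤ) : K) • dta K m n (cc ∘ ⇑π) := by
    suffices H : ∀ N : ℕ, ∀ π : Equiv.Perm (Fin n), invF π ≤ N →
        Φl (FF (bS K (-(2*m : K)) n) π)
          = ((Equiv.Perm.sign π : ℤ) : K) • dta K m n (cc ∘ ⇑π) by
      intro π; exact H (invF π) π le_rfl
    have hbase : ∀ π : Equiv.Perm (Fin n), descents π = ∅ →
        Φl (FF (bS K (-(2*m : K)) n) π)
          = ((Equiv.Perm.sign π : ℤ) : K) • dta K m n (cc ∘ ⇑π) := by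
      intro π hemp
      rw [eq_one_of_descents_empty hemp, FF_one]
      show φ (op 1) (dta K m n cc) = _
      rw [op_one, map_one, Module.End.one_apply, Equiv.Perm.sign_one]
      have h1 : cc ∘ ⇑(1 : Equiv.Perm (Fin n)) = cc := rfl
      rw [h1]
      norm_num
    intro N
    induction N with
    | zero =>
      intro π hπ
      have hemp : descents π = ∅ := by
        by_contra hcon
        obtain ⟨i, hi⟩ := Finset.nonempty_iff_ne_empty.2 hcon
        exact absurd (invF_decr hi) (by omega)
      exact hbase π hemp
    | succ N ih =>
      intro π hπ
      rcases Finset.eq_empty_or_nonempty (descents π) with hemp | hne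
      · exact hbase π hemp
      · have hj := (descents π).min'_mem hne
        set j := (descents π).min' hne with hjdef
        rw [FF_pos (bS K (-(2*m : K)) n) hne, ← hjdef]
        show φ (op (FF (bS K (-(2*m : K)) n) (π * tauP j) * bS K (-(2*m : K)) n j))
          (dta K m n cc) = _
        rw [op_mul, map_mul, Module.End.mul_apply, hs j]
        have hIH : φ (op (FF (bS K (-(2*m : K)) n) (π * tauP j))) (dta K m n cc)
            = ((Equiv.Perm.sign (π * tauP j) : ℤ) : K) • dta K m n (cc ∘ ⇑(π * tauP j)) :=
          ih (π * tauP j) (by have := invF_decr hj; omega)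
        rw [hIH, map_smul, sOp_dta]
        have hinv : ∀ p : Fin n, tauP j (tauP j p) = p := fun p => Equiv.swap_apply_self _ _ _
        have hcomp : (cc ∘ ⇑(π * tauP j)) ∘ ⇑(tauP j) = cc ∘ ⇑π := by
          funext p
          simp only [Function.comp_apply, Equiv.Perm.mul_apply, hinv]
        rw [hcomp]
        have hsgn : ((Equiv.Perm.sign (π * tauP j) : ℤ) : K)
            = -((Equiv.Perm.sign π : ℤ) : K) := by
          rw [Equiv.Perm.sign_mul,
            show Equiv.Perm.sign (tauP j) = -1 from Equiv.Perm.sign_swap (lowF_ne_hiF j)]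
          push_cast
          ring
        rw [hsgn, smul_neg, neg_smul, neg_neg]
  -- Φl kills the ideal
  have hPhiBid : ∀ v ∈ Bideal K (-(2*m : K)) n 1, Φl v = 0 := by
    intro v hv
    induction hv using Submodule.span_induction with
    | mem w hw =>
      obtain ⟨hf, a, b, rfl⟩ := hw
      show φ (op (a * EfB K (-(2*m : K)) n 1 hf * b)) (dta K m n cc) = 0
      rw [op_mul, op_mul, map_mul, map_mul, Module.End.mul_apply, Module.End.mul_apply]
      have h1 : φ (op a) (dta K m n cc) ∈ UU K m n :=
        phi_preserves_UU K m n φ hs he a _ (dta_mem_UU K m n hgood)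
      have hE : φ (op (EfB K (-(2*m : K)) n 1 hf)) = eOp K m n ⟨0, by omega⟩ := by
        rw [EfB_one]; exact he _
      rw [hE, eOp_eq_zero_UU K m n _ h1, map_zero]
    | zero => rw [map_zero]
    | add u w _ _ ihu ihw => rw [map_add, ihu, ihw, add_zero]
    | smul c u _ ihu => rw [map_smul, ihu, smul_zero]
  -- the span of the straightened group elements
  set S : Submodule K (BrauerAlg K (-(2*m : K)) n) :=
    Submodule.span K (Set.range (FF (bS K (-(2*m : K)) n))) with hSdef
  have hmulS : ∀ u1 ∈ S, ∀ u2 ∈ S, u1 * u2 ∈ S := by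
    intro u1 hu1
    induction hu1 using Submodule.span_induction with
    | mem f hf =>
      intro u2 hu2
      induction hu2 using Submodule.span_induction with
      | mem g hg =>
        obtain ⟨π1, rfl⟩ := hf
        obtain ⟨π2, rfl⟩ := hg
        rw [← FF_mul hbraidB hcommB hssB π2 π1]
        exact Submodule.subset_span ⟨π1 * π2, rfl⟩
      | zero => rw [mul_zero]; exact S.zero_mem
      | add a b _ _ ha hb => rw [mul_add]; exact S.add_mem ha hb
      | smul c a _ ha => rw [mul_smul_comm]; exact S.smul_mem c ha
    | zero => intro u2 _; rw [zero_mul]; exact S.zero_mem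
    | add a b _ _ ha hb =>
      intro u2 hu2; rw [add_mul]; exact S.add_mem (ha u2 hu2) (hb u2 hu2)
    | smul c a _ ha =>
      intro u2 hu2; rw [smul_mul_assoc]; exact S.smul_mem c (ha u2 hu2)
  -- decomposition of the whole algebra
  have htop : ∀ z : BrauerAlg K (-(2*m : K)) n, z ∈ S ⊔ Bideal K (-(2*m : K)) n 1 := by
    intro z
    obtain ⟨w, rfl⟩ := RingQuot.mkAlgHom_surjective K (BRel K (-(2*m : K)) n) z
    induction w using FreeAlgebra.induction with
    | grade0 r =>
      rw [AlgHom.commutes, Algebra.algebraMap_eq_smul_one]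
      apply Submodule.smul_mem
      apply Submodule.mem_sup_left
      rw [← FF_one (bS K (-(2*m : K)) n)]
      exact Submodule.subset_span ⟨1, rfl⟩
    | grade1 g =>
      cases g with
      | s i =>
        apply Submodule.mem_sup_left
        have heq : RingQuot.mkAlgHom K (BRel K (-(2*m : K)) n) (FreeAlgebra.ι K (BGen.s i))
            = bS K (-(2*m : K)) n i := rfl
        have hstep := FF_step hbraidB hcommB hssB 1 i
        rw [one_mul, FF_one, one_mul] at hstep
        rw [heq, ← hstep]
        exact Submodule.subset_span ⟨tauP i, rfl⟩
      | e i =>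
        apply Submodule.mem_sup_right
        have heq : RingQuot.mkAlgHom K (BRel K (-(2*m : K)) n) (FreeAlgebra.ι K (BGen.e i))
            = bE K (-(2*m : K)) n i := rfl
        rw [heq]
        exact bE_mem_Bideal K _ n i
    | mul w1 w2 ih1 ih2 =>
      rw [map_mul]
      obtain ⟨u1, hu1, v1, hv1, h1⟩ := Submodule.mem_sup.1 ih1
      obtain ⟨u2, hu2, v2, hv2, h2⟩ := Submodule.mem_sup.1 ih2
      rw [← h1, ← h2]
      have hexp : (u1 + v1) * (u2 + v2) = u1*u2 + (u1*v2 + v1*(u2+v2)) := by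
        rw [add_mul, mul_add, add_assoc]
      rw [hexp]
      apply Submodule.add_mem
      · exact Submodule.mem_sup_left (hmulS u1 hu1 u2 hu2)
      · apply Submodule.mem_sup_right
        exact Submodule.add_mem _ (Bideal_mul_left K _ n u1 hv2)
          (Bideal_mul_right K _ n (u2+v2) hv1)
    | add w1 w2 ih1 ih2 =>
      rw [map_add]; exact Submodule.add_mem _ ih1 ih2
  -- decompose y
  obtain ⟨u, hu, v, hv, huv⟩ := Submodule.mem_sup.1 (htop y)
  have h0 : Φl y = 0 := by
    show φ (op y) (dta K m n cc) = 0
    rw [hy, LinearMap.zero_apply]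
  have hPhiu : Φl u = 0 := by
    have hu' : u = y - v := by rw [← huv]; abel
    rw [hu', map_sub, h0, hPhiBid v hv, sub_zero]
  rw [hSdef] at hu
  obtain ⟨aC, haC⟩ := (Submodule.mem_span_range_iff_exists_fun K).1 hu
  have hsignne : ∀ π : Equiv.Perm (Fin n), ((Equiv.Perm.sign π : ℤ) : K) ≠ 0 := by
    intro π
    rcases Int.units_eq_one_or (Equiv.Perm.sign π) with h | h <;> rw [h] <;> norm_num
  have hinjc : ∀ π π0 : Equiv.Perm (Fin n), cc ∘ ⇑π0 = cc ∘ ⇑π → π = π0 := by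
    intro π π0 hcp
    apply Equiv.ext
    intro p
    have h1 := congrFun hcp p
    simp only [Function.comp_apply, hccdef] at h1
    exact (Fin.ext (by simpa [Fin.ext_iff] using h1)).symm
  have hcoef : ∀ π0 : Equiv.Perm (Fin n), aC π0 = 0 := by
    intro π0
    have hPhiu2 : (∑ π : Equiv.Perm (Fin n),
        aC π • (((Equiv.Perm.sign π : ℤ) : K) • dta K m n (cc ∘ ⇑π))) = 0 := by
      calc (∑ π : Equiv.Perm (Fin n),
          aC π • (((Equiv.Perm.sign π : ℤ) : K) • dta K m n (cc ∘ ⇑π)))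
          = Φl (∑ π : Equiv.Perm (Fin n), aC π • FF (bS K (-(2*m : K)) n) π) := by
            rw [map_sum]
            apply Finset.sum_congr rfl
            intro π _
            rw [map_smul, hPhiF]
      _ = Φl u := by rw [haC]
      _ = 0 := hPhiu
    have hev := congrFun hPhiu2 (cc ∘ ⇑π0)
    simp only [Finset.sum_apply, Pi.smul_apply, smul_eq_mul, Pi.zero_apply, dta] at hev
    rw [Finset.sum_eq_single π0] at hev
    · rw [if_pos rfl, mul_one] at hev
      rcases mul_eq_zero.1 hev with h | h
      · exact h
      · exact absurd h (hsignne π0)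
    · intro b _ hb
      rw [if_neg (fun hc => hb (hinjc b π0 hc)), mul_zero, mul_zero]
    · intro hcon; exact absurd (Finset.mem_univ π0) hcon
  have hu0 : u = 0 := by
    rw [← haC]
    apply Finset.sum_eq_zero
    intro π _
    rw [hcoef π, zero_smul]
  rw [← huv, hu0, zero_add]
  exact hv

end SpBrauer
end
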